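/- (Key step in the proof of Theorem 2(a)) Assume (C1); assume there exist φ₁, ψ₁ ∈ H_sm with ‖φ₁‖ = ‖ψ₁‖ = 1 such that L(φ₁, ψ₁) = λ₀ := sup{L(u,v) : u, v ∈ H}, σ²_X(φ₁) > 0 and σ²_Y(ψ₁) > 0; assume the sieve setup with d_n → ∞, and that τ_n ≥ 0, τ_n → 0, τ_n Ψ(Π_{H_{d_n}} φ₁) → 0 and τ_n Ψ(Π_{H_{d_n}} ψ₁) → 0. Then L_{τ_n}(Π_{H_{d_n}}φ₁/‖Π_{H_{d_n}}φ₁‖, Π_{H_{d_n}}ψ₁/‖Π_{H_{d_n}}ψ₁‖) → λ₀, and consequently λ_{κ_n} := sup{L_{τ_n}(u,v) : u, v ∈ H_{d_n}, u ≠ 0, v ≠ 0} → λ₀ as n → ∞. -/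
import Mathlib


open Filter
open scoped RealInnerProductSpace Topology

namespace RSCCA

variable {H : Type*} [NormedAddCommGroup H] [InnerProductSpace ℝ H]

/-- The scale functional `σ²(u) = ⟪u, G u⟫` associated with a diagonal block `G`. -/
noncomputable def sigSq (G : H →L[ℝ] H) (u : H) : ℝ := ⟪u, G u⟫

/-- The co-association functional `γ(u,v) = ⟪u, G12 v⟫`. -/
noncomputable def gam (G12 : H →L[ℝ] H) (u v : H) : ℝ := ⟪u, G12 v⟫

/-- The squared association `L(u,v) = γ(u,v)²/(σ²_X(u) σ²_Y(v))`.  In `ℝ`, division by `0`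
equals `0`, which matches the convention `L(u,v) = 0` whenever `σ²_X(u) = 0` or
`σ²_Y(v) = 0` (the factors are nonnegative under (C1)). -/
noncomputable def Lfun (G11 G12 G22 : H →L[ℝ] H) (u v : H) : ℝ :=
  gam G12 u v ^ 2 / (sigSq G11 u * sigSq G22 v)

/-- `λ₀ = sup {L(u,v) : u, v ∈ H}`. -/
noncomputable def lam0 (G11 G12 G22 : H →L[ℝ] H) : ℝ :=
  sSup {x : ℝ | ∃ u v : H, x = Lfun G11 G12 G22 u v}

/-- `L^X(u₁,u₂)` (and `L^Y`, by using the block `Γ₂₂`). -/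
noncomputable def LXfun (G : H →L[ℝ] H) (u₁ u₂ : H) : ℝ :=
  ⟪u₁, G u₂⟫ ^ 2 / (⟪u₁, G u₁⟫ * ⟪u₂, G u₂⟫)

/-- (C1): `G11, G12, G21, G22` are the blocks of a self-adjoint, positive semidefinite,
compact bounded linear operator on `H × H` (stated blockwise, which is equivalent). -/
structure C1 (G11 G12 G21 G22 : H →L[ℝ] H) : Prop where
  sa11 : ∀ u v : H, ⟪G11 u, v⟫ = ⟪u, G11 v⟫
  sa22 : ∀ u v : H, ⟪G22 u, v⟫ = ⟪u, G22 v⟫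
  adj : ∀ u v : H, ⟪u, G12 v⟫ = ⟪G21 u, v⟫
  pos : ∀ u v : H, 0 ≤ ⟪u, G11 u⟫ + 2 * ⟪u, G12 v⟫ + ⟪v, G22 v⟫
  cpt11 : IsCompactOperator (⇑G11)
  cpt12 : IsCompactOperator (⇑G12)
  cpt21 : IsCompactOperator (⇑G21)
  cpt22 : IsCompactOperator (⇑G22)

/-- The penalty functional `Ψ(u) = ‖D u‖²` on the smooth subspace. -/
noncomputable def Psi {Hsm : Submodule ℝ H} (D : Hsm →ₗ[ℝ] H) (u : Hsm) : ℝ := ‖D u‖ ^ 2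

/-- The penalized association `L_τ(u,v)` on the smooth subspace. -/
noncomputable def Lpen (G11 G12 G22 : H →L[ℝ] H) {Hsm : Submodule ℝ H} (D : Hsm →ₗ[ℝ] H)
    (τ : ℝ) (u v : Hsm) : ℝ :=
  gam G12 (u : H) (v : H) ^ 2 /
    ((sigSq G11 (u : H) + τ * Psi D u) * (sigSq G22 (v : H) + τ * Psi D v))

/-- (C2): existence of first canonical directions `φ₁, ψ₁`, maximality, spectral gap and
uniqueness up to sign. -/
structure C2 (G11 G12 G22 : H →L[ℝ] H) {Hsm : Submodule ℝ H} (φ₁ ψ₁ : Hsm) (ρ₀ : ℝ) :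
    Prop where
  norm_phi : ‖(φ₁ : H)‖ = 1
  norm_psi : ‖(ψ₁ : H)‖ = 1
  rho_pos : 0 < ρ₀
  max_val : Lfun G11 G12 G22 (φ₁ : H) (ψ₁ : H) = ρ₀ ^ 2
  le_max : ∀ u v : H, Lfun G11 G12 G22 u v ≤ ρ₀ ^ 2
  gap : ∃ ρ₁ : ℝ, 0 ≤ ρ₁ ∧ ρ₁ < ρ₀ ∧ ∀ u v : H,
    ⟪u, G11 (φ₁ : H)⟫ = 0 → ⟪v, G22 (ψ₁ : H)⟫ = 0 → Lfun G11 G12 G22 u v ≤ ρ₁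
  unique : ∀ φ ψ : Hsm, ‖(φ : H)‖ = 1 → ‖(ψ : H)‖ = 1 →
    Lfun G11 G12 G22 (φ : H) (ψ : H) = ρ₀ ^ 2 → (φ = φ₁ ∧ ψ = ψ₁) ∨ (φ = -φ₁ ∧ ψ = -ψ₁)

/-- (C3a). -/
def C3a (G11 G22 : H →L[ℝ] H) {Hsm : Submodule ℝ H} (D : Hsm →ₗ[ℝ] H) : Prop :=
  ∀ u : Hsm, u ≠ 0 → Psi D u = 0 → 0 < sigSq G11 (u : H) ∧ 0 < sigSq G22 (u : H)

/-- (C3b): the null space `N` of `Ψ` is finite dimensional and `Ψ` dominates `d ‖·‖²`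
on `H_sm ∩ N^⊥`. -/
def C3b {Hsm : Submodule ℝ H} (D : Hsm →ₗ[ℝ] H) : Prop :=
  FiniteDimensional ℝ (LinearMap.ker D) ∧
    ∃ d : ℝ, 0 < d ∧ ∀ u : Hsm, u ≠ 0 →
      (u : H) ∈ ((LinearMap.ker D).map Hsm.subtype)ᗮ → d * ‖(u : H)‖ ^ 2 < Psi D u

/-- Sample setup: nonnegativity and (bi)homogeneity of the sample scale and
co-association functionals. -/
structure SampleSetup {Hsm : Submodule ℝ H} (sX sY : Hsm → ℝ) (g : Hsm → Hsm → ℝ) :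
    Prop where
  sX_nonneg : ∀ u, 0 ≤ sX u
  sY_nonneg : ∀ v, 0 ≤ sY v
  sX_homog : ∀ (a : ℝ) (u), sX (a • u) = a ^ 2 * sX u
  sY_homog : ∀ (a : ℝ) (v), sY (a • v) = a ^ 2 * sY v
  g_homog : ∀ (a b : ℝ) (u v), g (a • u) (b • v) = a * b * g u v

/-- The empirical penalized association `L̂_τ(u,v)`. -/
noncomputable def Lhat {Hsm : Submodule ℝ H} (D : Hsm →ₗ[ℝ] H) (sX sY : Hsm → ℝ)
    (g : Hsm → Hsm → ℝ) (τ : ℝ) (u v : Hsm) : ℝ :=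
  g u v ^ 2 / ((sX u + τ * Psi D u) * (sY v + τ * Psi D v))

/-- `C_{n,X}` (resp. `C_{n,Y}` taking `G = Γ₂₂`, `s = s²_{n,Y}`): the supremum of
`|s²_n(u) − σ²(u)|` over `u ∈ H_sm` with `‖u‖²_{τ} = σ²(u) + τΨ(u) = 1`. -/
noncomputable def Cerr (G : H →L[ℝ] H) {Hsm : Submodule ℝ H} (D : Hsm →ₗ[ℝ] H)
    (s : Hsm → ℝ) (τ : ℝ) : ℝ :=
  sSup {x : ℝ | ∃ u : Hsm, sigSq G (u : H) + τ * Psi D u = 1 ∧ x = |s u - sigSq G (u : H)|}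

/-- `C_{n,XY}`. -/
noncomputable def CerrXY (G11 G12 G22 : H →L[ℝ] H) {Hsm : Submodule ℝ H}
    (D : Hsm →ₗ[ℝ] H) (g : Hsm → Hsm → ℝ) (τ : ℝ) : ℝ :=
  sSup {x : ℝ | ∃ u v : Hsm, sigSq G11 (u : H) + τ * Psi D u = 1 ∧
    sigSq G22 (v : H) + τ * Psi D v = 1 ∧ x = |g u v - gam G12 (u : H) (v : H)|}

/-- (C4a). -/
def C4a (G11 G12 G22 : H →L[ℝ] H) {Hsm : Submodule ℝ H} (D : Hsm →ₗ[ℝ] H)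
    (sX sY : ℕ → Hsm → ℝ) (g : ℕ → Hsm → Hsm → ℝ) (τ : ℕ → ℝ) : Prop :=
  (∀ n, 0 ≤ τ n) ∧ Tendsto τ atTop (𝓝 0) ∧
    Tendsto (fun n => Cerr G11 D (sX n) (τ n)) atTop (𝓝 0) ∧
    Tendsto (fun n => Cerr G22 D (sY n) (τ n)) atTop (𝓝 0) ∧
    Tendsto (fun n => CerrXY G11 G12 G22 D (g n) (τ n)) atTop (𝓝 0) ∧
    ∃ A : ℝ, 0 < A ∧ ∀ (n : ℕ) (u v : Hsm), u ≠ 0 → v ≠ 0 →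
      Lhat D (sX n) (sY n) (g n) (τ n) u v ≤ A

/-- (C4b). -/
def C4b (G11 G12 G22 : H →L[ℝ] H) {Hsm : Submodule ℝ H} (D : Hsm →ₗ[ℝ] H)
    (sX sY : ℕ → Hsm → ℝ) (g : ℕ → Hsm → Hsm → ℝ) (τ : ℕ → ℝ) : Prop :=
  (∀ n, 0 ≤ τ n) ∧ Tendsto τ atTop (𝓝 0) ∧
    Tendsto (fun n => Cerr G11 D (sX n) (τ n)) atTop (𝓝 0) ∧
    Tendsto (fun n => Cerr G22 D (sY n) (τ n)) atTop (𝓝 0) ∧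
    ∃ (r : ℕ → Hsm → Hsm → ℝ) (ρXY : H → H → ℝ),
      (∀ n u v, |r n u v| ≤ 1) ∧ (∀ u v, |ρXY u v| ≤ 1) ∧
      (∀ n u v, g n u v = r n u v * Real.sqrt (sX n u) * Real.sqrt (sY n v)) ∧
      (∀ u v : H, gam G12 u v = ρXY u v * Real.sqrt (sigSq G11 u) * Real.sqrt (sigSq G22 v)) ∧
      Tendsto (fun n => sSup {x : ℝ | ∃ u v : Hsm, ‖(u : H)‖ = 1 ∧ ‖(v : H)‖ = 1 ∧
        x = |r n u v - ρXY (u : H) (v : H)|}) atTop (𝓝 0)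

/-- The sieve space `H_d`, spanned by the first `d` basis elements. -/
def Hd (ξ : ℕ → H) (d : ℕ) : Submodule ℝ H := Submodule.span ℝ (ξ '' Set.Iio d)

/-- The orthogonal projection `Π_{H_d} u`, as an element of `H_sm`
(each basis element lies in `H_sm`). -/
noncomputable def projSm {Hsm : Submodule ℝ H} (ξ : ℕ → H) (hξ : ∀ i, ξ i ∈ Hsm)
    (d : ℕ) (u : H) : Hsm :=
  ∑ i ∈ Finset.range d, ⟪ξ i, u⟫ • (⟨ξ i, hξ i⟩ : Hsm)

/-- Sieve setup: `ξ` is an orthonormal basis of `H` whose elements are smooth, and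
`d_n → ∞`. -/
structure SieveSetup (Hsm : Submodule ℝ H) (ξ : ℕ → H) (dn : ℕ → ℕ) : Prop where
  orth : Orthonormal ℝ ξ
  total : (Submodule.span ℝ (Set.range ξ)).topologicalClosure = ⊤
  mem : ∀ i, ξ i ∈ Hsm
  dn_tendsto : Tendsto dn atTop atTop

/-- `D_{n,X}` (resp. `D_{n,Y}`). -/
noncomputable def Derr (G : H →L[ℝ] H) {Hsm : Submodule ℝ H} (D : Hsm →ₗ[ℝ] H)
    (ξ : ℕ → H) (d : ℕ) (s : Hsm → ℝ) (τ : ℝ) : ℝ :=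
  sSup {x : ℝ | ∃ u : Hsm, (u : H) ∈ Hd ξ d ∧ sigSq G (u : H) + τ * Psi D u = 1 ∧
    x = |s u - sigSq G (u : H)|}

/-- `D_{n,XY}`. -/
noncomputable def DerrXY (G11 G12 G22 : H →L[ℝ] H) {Hsm : Submodule ℝ H}
    (D : Hsm →ₗ[ℝ] H) (ξ : ℕ → H) (d : ℕ) (g : Hsm → Hsm → ℝ) (τ : ℝ) : ℝ :=
  sSup {x : ℝ | ∃ u v : Hsm, (u : H) ∈ Hd ξ d ∧ (v : H) ∈ Hd ξ d ∧
    sigSq G11 (u : H) + τ * Psi D u = 1 ∧ sigSq G22 (v : H) + τ * Psi D v = 1 ∧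
    x = |g u v - gam G12 (u : H) (v : H)|}

/-- (C5a). -/
def C5a (G11 G12 G22 : H →L[ℝ] H) {Hsm : Submodule ℝ H} (D : Hsm →ₗ[ℝ] H)
    (ξ : ℕ → H) (dn : ℕ → ℕ) (sX sY : ℕ → Hsm → ℝ) (g : ℕ → Hsm → Hsm → ℝ)
    (τ : ℕ → ℝ) : Prop :=
  (∀ n, 0 ≤ τ n) ∧ Tendsto τ atTop (𝓝 0) ∧
    Tendsto (fun n => Derr G11 D ξ (dn n) (sX n) (τ n)) atTop (𝓝 0) ∧
    Tendsto (fun n => Derr G22 D ξ (dn n) (sY n) (τ n)) atTop (𝓝 0) ∧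
    Tendsto (fun n => DerrXY G11 G12 G22 D ξ (dn n) (g n) (τ n)) atTop (𝓝 0) ∧
    ∃ A : ℝ, 0 < A ∧ ∀ (n : ℕ) (u v : Hsm), u ≠ 0 → v ≠ 0 →
      Lhat D (sX n) (sY n) (g n) (τ n) u v ≤ A

/-- (C5b). -/
def C5b (G11 G12 G22 : H →L[ℝ] H) {Hsm : Submodule ℝ H} (D : Hsm →ₗ[ℝ] H)
    (ξ : ℕ → H) (dn : ℕ → ℕ) (sX sY : ℕ → Hsm → ℝ) (g : ℕ → Hsm → Hsm → ℝ)
    (τ : ℕ → ℝ) : Prop :=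
  (∀ n, 0 ≤ τ n) ∧ Tendsto τ atTop (𝓝 0) ∧
    Tendsto (fun n => Derr G11 D ξ (dn n) (sX n) (τ n)) atTop (𝓝 0) ∧
    Tendsto (fun n => Derr G22 D ξ (dn n) (sY n) (τ n)) atTop (𝓝 0) ∧
    ∃ (r : ℕ → Hsm → Hsm → ℝ) (ρXY : H → H → ℝ),
      (∀ n u v, |r n u v| ≤ 1) ∧ (∀ u v, |ρXY u v| ≤ 1) ∧
      (∀ n u v, g n u v = r n u v * Real.sqrt (sX n u) * Real.sqrt (sY n v)) ∧
      (∀ u v : H, gam G12 u v = ρXY u v * Real.sqrt (sigSq G11 u) * Real.sqrt (sigSq G22 v)) ∧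
      Tendsto (fun n => sSup {x : ℝ | ∃ u v : Hsm, (u : H) ∈ Hd ξ (dn n) ∧
        (v : H) ∈ Hd ξ (dn n) ∧ sigSq G11 (u : H) + τ n * Psi D u = 1 ∧
        sigSq G22 (v : H) + τ n * Psi D v = 1 ∧
        x = |r n u v - ρXY (u : H) (v : H)|}) atTop (𝓝 0)

/-- `ζ_n` (resp. `ν_n` with `G = Γ₂₂`): sup over unit vectors of `H_sm`. -/
noncomputable def zeta (G : H →L[ℝ] H) {Hsm : Submodule ℝ H} (s : Hsm → ℝ) : ℝ :=
  sSup {x : ℝ | ∃ u : Hsm, ‖(u : H)‖ = 1 ∧ x = |s u - sigSq G (u : H)|}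

/-- `η_n`. -/
noncomputable def eta (G12 : H →L[ℝ] H) {Hsm : Submodule ℝ H} (g : Hsm → Hsm → ℝ) : ℝ :=
  sSup {x : ℝ | ∃ u v : Hsm, ‖(u : H)‖ = 1 ∧ ‖(v : H)‖ = 1 ∧
    x = |g u v - gam G12 (u : H) (v : H)|}

/-- `ℓᵢ(τ) = inf {⟪u, Γᵢᵢ u⟫ + τ Ψ(u) : u ∈ H_sm, ‖u‖ = 1}`. -/
noncomputable def ell (G : H →L[ℝ] H) {Hsm : Submodule ℝ H} (D : Hsm →ₗ[ℝ] H)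
    (τ : ℝ) : ℝ :=
  sInf {x : ℝ | ∃ u : Hsm, ‖(u : H)‖ = 1 ∧ x = sigSq G (u : H) + τ * Psi D u}


section lemmas
variable {G11 G12 G21 G22 : H →L[ℝ] H}

lemma sig11_nonneg (hC1 : C1 G11 G12 G21 G22) (u : H) : 0 ≤ sigSq G11 u := by
  have := hC1.pos u 0
  simpa [sigSq] using this

lemma sig22_nonneg (hC1 : C1 G11 G12 G21 G22) (v : H) : 0 ≤ sigSq G22 v := by
  have := hC1.pos 0 v
  simpa [sigSq] using this

lemma cs (hC1 : C1 G11 G12 G21 G22) (u v : H) :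
    gam G12 u v ^ 2 ≤ sigSq G11 u * sigSq G22 v := by
  have h : ∀ t : ℝ, 0 ≤ sigSq G11 u * (t * t) + (2 * gam G12 u v) * t + sigSq G22 v := by
    intro t
    have := hC1.pos (t • u) v
    simp only [map_smul, real_inner_smul_left, real_inner_smul_right, smul_eq_mul] at this
    simp only [sigSq, gam]
    nlinarith [this]
  have := discrim_le_zero h
  simp only [discrim] at this
  nlinarith [this]

lemma Lfun_le_one (hC1 : C1 G11 G12 G21 G22) (u v : H) : Lfun G11 G12 G22 u v ≤ 1 := by
  rcases lt_or_ge 0 (sigSq G11 u * sigSq G22 v) with hp | hp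
  · rw [Lfun, div_le_one hp]
    exact cs hC1 u v
  · have hz : sigSq G11 u * sigSq G22 v = 0 :=
      le_antisymm hp (mul_nonneg (sig11_nonneg hC1 u) (sig22_nonneg hC1 v))
    simp [Lfun, hz]

lemma Lfun_nonneg (hC1 : C1 G11 G12 G21 G22) (u v : H) : 0 ≤ Lfun G11 G12 G22 u v :=
  div_nonneg (sq_nonneg _) (mul_nonneg (sig11_nonneg hC1 u) (sig22_nonneg hC1 v))

lemma lam0_bdd (hC1 : C1 G11 G12 G21 G22) :
    BddAbove {x : ℝ | ∃ u v : H, x = Lfun G11 G12 G22 u v} :=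
  ⟨1, by rintro x ⟨u, v, rfl⟩; exact Lfun_le_one hC1 u v⟩

lemma Lfun_le_lam0 (hC1 : C1 G11 G12 G21 G22) (u v : H) :
    Lfun G11 G12 G22 u v ≤ lam0 G11 G12 G22 :=
  le_csSup (lam0_bdd hC1) ⟨u, v, rfl⟩

lemma lam0_nonneg (hC1 : C1 G11 G12 G21 G22) : 0 ≤ lam0 G11 G12 G22 :=
  (Lfun_nonneg hC1 0 0).trans (Lfun_le_lam0 hC1 0 0)

lemma Psi_nonneg {Hsm : Submodule ℝ H} (D : Hsm →ₗ[ℝ] H) (u : Hsm) : 0 ≤ Psi D u :=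
  sq_nonneg _

lemma Lpen_le_lam0 (hC1 : C1 G11 G12 G21 G22) {Hsm : Submodule ℝ H} (D : Hsm →ₗ[ℝ] H)
    {τ : ℝ} (hτ : 0 ≤ τ) (u v : Hsm) :
    Lpen G11 G12 G22 D τ u v ≤ lam0 G11 G12 G22 := by
  have hX := sig11_nonneg hC1 (u : H)
  have hY := sig22_nonneg hC1 (v : H)
  have hPu := mul_nonneg hτ (Psi_nonneg D u)
  have hPv := mul_nonneg hτ (Psi_nonneg D v)
  rcases eq_or_lt_of_le (mul_nonneg hX hY) with hz | hp
  · -- sigX * sigY = 0 ⇒ gam = 0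
    have hg : gam G12 (u : H) (v : H) = 0 := by
      have := cs hC1 (u : H) (v : H)
      nlinarith [sq_nonneg (gam G12 (u : H) (v : H))]
    have : Lpen G11 G12 G22 D τ u v = 0 := by simp [Lpen, hg]
    rw [this]; exact lam0_nonneg hC1
  · refine le_trans ?_ (Lfun_le_lam0 hC1 (u : H) (v : H))
    rw [Lpen, Lfun]
    apply div_le_div_of_nonneg_left (sq_nonneg _) hp
    have h1 : sigSq G11 (u : H) ≤ sigSq G11 (u : H) + τ * Psi D u := by linarith
    have h2 : sigSq G22 (v : H) ≤ sigSq G22 (v : H) + τ * Psi D v := by linarith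
    nlinarith [hp]

lemma Psi_smul {Hsm : Submodule ℝ H} (D : Hsm →ₗ[ℝ] H) (a : ℝ) (u : Hsm) :
    Psi D (a • u) = a ^ 2 * Psi D u := by
  simp [Psi, map_smul, norm_smul, mul_pow, sq_abs]

lemma Lpen_smul (G11 G12 G22 : H →L[ℝ] H) {Hsm : Submodule ℝ H} (D : Hsm →ₗ[ℝ] H)
    (τ : ℝ) {a b : ℝ} (ha : a ≠ 0) (hb : b ≠ 0) (u v : Hsm) :
    Lpen G11 G12 G22 D τ (a • u) (b • v) = Lpen G11 G12 G22 D τ u v := by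
  have hga : gam G12 ((a • u : Hsm) : H) ((b • v : Hsm) : H) = a * b * gam G12 (u : H) (v : H) := by
    simp [gam, real_inner_smul_left, real_inner_smul_right, map_smul]
    ring
  have hsa : sigSq G11 ((a • u : Hsm) : H) = a ^ 2 * sigSq G11 (u : H) := by
    simp [sigSq, real_inner_smul_left, real_inner_smul_right, map_smul]
    ring
  have hsb : sigSq G22 ((b • v : Hsm) : H) = b ^ 2 * sigSq G22 (v : H) := by
    simp [sigSq, real_inner_smul_left, real_inner_smul_right, map_smul]
    ring
  rw [Lpen, Lpen, hga, hsa, hsb, Psi_smul, Psi_smul]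
  rw [show (a * b * gam G12 (u : H) (v : H)) ^ 2
      = (a ^ 2 * b ^ 2) * gam G12 (u : H) (v : H) ^ 2 by ring]
  rw [show (a ^ 2 * sigSq G11 (u : H) + τ * (a ^ 2 * Psi D u)) *
        (b ^ 2 * sigSq G22 (v : H) + τ * (b ^ 2 * Psi D v))
      = (a ^ 2 * b ^ 2) * ((sigSq G11 (u : H) + τ * Psi D u) *
        (sigSq G22 (v : H) + τ * Psi D v)) by ring]
  exact mul_div_mul_left _ _ (by positivity)

end lemmas

/-- key step in the proof of Theorem 2(a): the penalized association of
the normalized projections of `(φ₁, ψ₁)` onto `H_{d_n}` converges to `λ₀`, and hence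
`λ_{κ_n} → λ₀`. -/
theorem statement14 [CompleteSpace H] [TopologicalSpace.SeparableSpace H]
    (G11 G12 G21 G22 : H →L[ℝ] H) {Hsm : Submodule ℝ H} (D : Hsm →ₗ[ℝ] H)
    (ξ : ℕ → H) (dn : ℕ → ℕ) (τ : ℕ → ℝ)
    (hC1 : C1 G11 G12 G21 G22) (φ₁ ψ₁ : Hsm)
    (hφn : ‖(φ₁ : H)‖ = 1) (hψn : ‖(ψ₁ : H)‖ = 1)
    (hmax : Lfun G11 G12 G22 (φ₁ : H) (ψ₁ : H) = lam0 G11 G12 G22)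
    (hX : 0 < sigSq G11 (φ₁ : H)) (hY : 0 < sigSq G22 (ψ₁ : H))
    (hSieve : SieveSetup Hsm ξ dn)
    (hτ0 : ∀ n, 0 ≤ τ n) (hτ : Tendsto τ atTop (𝓝 0))
    (hpφ : Tendsto (fun n => τ n * Psi D (projSm ξ hSieve.mem (dn n) (φ₁ : H)))
      atTop (𝓝 0))
    (hpψ : Tendsto (fun n => τ n * Psi D (projSm ξ hSieve.mem (dn n) (ψ₁ : H)))
      atTop (𝓝 0)) :
    Tendsto (fun n => Lpen G11 G12 G22 D (τ n)
        ((‖(projSm ξ hSieve.mem (dn n) (φ₁ : H) : H)‖)⁻¹ •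
          projSm ξ hSieve.mem (dn n) (φ₁ : H))
        ((‖(projSm ξ hSieve.mem (dn n) (ψ₁ : H) : H)‖)⁻¹ •
          projSm ξ hSieve.mem (dn n) (ψ₁ : H)))
      atTop (𝓝 (lam0 G11 G12 G22)) ∧
      Tendsto (fun n => sSup {x : ℝ | ∃ u v : Hsm, (u : H) ∈ Hd ξ (dn n) ∧
          (v : H) ∈ Hd ξ (dn n) ∧ u ≠ 0 ∧ v ≠ 0 ∧
          x = Lpen G11 G12 G22 D (τ n) u v}) atTop (𝓝 (lam0 G11 G12 G22)) := by
    classical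
  set pφ : ℕ → Hsm := fun n => projSm ξ hSieve.mem (dn n) (φ₁ : H) with hpφdef
  set pψ : ℕ → Hsm := fun n => projSm ξ hSieve.mem (dn n) (ψ₁ : H) with hpψdef
  -- coercion of projSm
  have hcoe : ∀ (d : ℕ) (u : H),
      ((projSm ξ hSieve.mem d u : Hsm) : H) = ∑ i ∈ Finset.range d, ⟪ξ i, u⟫ • ξ i := by
    intro d u
    simp [projSm]
  -- membership of projections in the sieve space
  have hmem : ∀ (d : ℕ) (u : H), ((projSm ξ hSieve.mem d u : Hsm) : H) ∈ Hd ξ d := by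
    intro d u
    rw [hcoe]
    refine Submodule.sum_mem _ fun i hi => Submodule.smul_mem _ _ ?_
    exact Submodule.subset_span ⟨i, Finset.mem_range.mp hi, rfl⟩
  -- Hilbert basis expansion
  let b : HilbertBasis ℕ ℝ H := HilbertBasis.mk hSieve.orth (le_of_eq hSieve.total.symm)
  have hbcoe : ∀ i, (b i : H) = ξ i := fun i =>
    congrFun (HilbertBasis.coe_mk hSieve.orth (le_of_eq hSieve.total.symm)) i
  have hbkey : ∀ u : H,
      Tendsto (fun d => ∑ i ∈ Finset.range d, ⟪ξ i, u⟫ • ξ i) atTop (𝓝 u) := by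
    intro u
    have h := (b.hasSum_repr u).tendsto_sum_nat
    refine h.congr fun d => Finset.sum_congr rfl fun i _ => ?_
    rw [b.repr_apply_apply, hbcoe]
  have hcφ : Tendsto (fun n => ((pφ n : Hsm) : H)) atTop (𝓝 (φ₁ : H)) := by
    have := (hbkey (φ₁ : H)).comp hSieve.dn_tendsto
    refine this.congr fun n => ?_
    simp [hpφdef, hcoe, Function.comp]
  have hcψ : Tendsto (fun n => ((pψ n : Hsm) : H)) atTop (𝓝 (ψ₁ : H)) := by
    have := (hbkey (ψ₁ : H)).comp hSieve.dn_tendsto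
    refine this.congr fun n => ?_
    simp [hpψdef, hcoe, Function.comp]
  -- continuity of the functionals
  have hsigc : ∀ G : H →L[ℝ] H, Continuous fun u : H => sigSq G u := fun G =>
    continuous_id.inner G.continuous
  have hs11 : Tendsto (fun n => sigSq G11 ((pφ n : Hsm) : H)) atTop
      (𝓝 (sigSq G11 (φ₁ : H))) := ((hsigc G11).tendsto _).comp hcφ
  have hs22 : Tendsto (fun n => sigSq G22 ((pψ n : Hsm) : H)) atTop
      (𝓝 (sigSq G22 (ψ₁ : H))) := ((hsigc G22).tendsto _).comp hcψ
  have hgamc : Continuous fun p : H × H => gam G12 p.1 p.2 :=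
    continuous_fst.inner (G12.continuous.comp continuous_snd)
  have hg : Tendsto (fun n => gam G12 ((pφ n : Hsm) : H) ((pψ n : Hsm) : H)) atTop
      (𝓝 (gam G12 (φ₁ : H) (ψ₁ : H))) :=
    (hgamc.tendsto _).comp (hcφ.prodMk_nhds hcψ)
  -- denominators
  have hDx : Tendsto (fun n => sigSq G11 ((pφ n : Hsm) : H) + τ n * Psi D (pφ n)) atTop
      (𝓝 (sigSq G11 (φ₁ : H))) := by
    have := hs11.add hpφ
    simpa using this
  have hDy : Tendsto (fun n => sigSq G22 ((pψ n : Hsm) : H) + τ n * Psi D (pψ n)) atTop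
      (𝓝 (sigSq G22 (ψ₁ : H))) := by
    have := hs22.add hpψ
    simpa using this
  -- convergence of the unnormalized penalized association
  have hf : Tendsto (fun n => Lpen G11 G12 G22 D (τ n) (pφ n) (pψ n)) atTop
      (𝓝 (lam0 G11 G12 G22)) := by
    have hlim := (hg.pow 2).div (hDx.mul hDy)
      (by positivity : sigSq G11 (φ₁ : H) * sigSq G22 (ψ₁ : H) ≠ 0)
    rw [show gam G12 (φ₁ : H) (ψ₁ : H) ^ 2 / (sigSq G11 (φ₁ : H) * sigSq G22 (ψ₁ : H))
        = lam0 G11 G12 G22 from hmax] at hlim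
    exact hlim
  -- eventual nonvanishing of the projections
  have hnφ : Tendsto (fun n => ‖((pφ n : Hsm) : H)‖) atTop (𝓝 1) := by
    have := hcφ.norm; rwa [hφn] at this
  have hnψ : Tendsto (fun n => ‖((pψ n : Hsm) : H)‖) atTop (𝓝 1) := by
    have := hcψ.norm; rwa [hψn] at this
  have hevφ : ∀ᶠ n in atTop, 0 < ‖((pφ n : Hsm) : H)‖ :=
    hnφ.eventually (eventually_gt_nhds one_pos)
  have hevψ : ∀ᶠ n in atTop, 0 < ‖((pψ n : Hsm) : H)‖ :=
    hnψ.eventually (eventually_gt_nhds one_pos)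
  constructor
  · -- part (a)
    refine hf.congr' ?_
    filter_upwards [hevφ, hevψ] with n hφ0 hψ0
    exact (Lpen_smul G11 G12 G22 D (τ n) (inv_ne_zero hφ0.ne') (inv_ne_zero hψ0.ne')
      (pφ n) (pψ n)).symm
  · -- part (b): squeeze
    set S : ℕ → Set ℝ := fun n => {x : ℝ | ∃ u v : Hsm, (u : H) ∈ Hd ξ (dn n) ∧
        (v : H) ∈ Hd ξ (dn n) ∧ u ≠ 0 ∧ v ≠ 0 ∧
        x = Lpen G11 G12 G22 D (τ n) u v} with hSdef
    have hub : ∀ n, ∀ x ∈ S n, x ≤ lam0 G11 G12 G22 := by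
      rintro n x ⟨u, v, -, -, -, -, rfl⟩
      exact Lpen_le_lam0 hC1 D (hτ0 n) u v
    have hle : ∀ n, sSup (S n) ≤ lam0 G11 G12 G22 := fun n =>
      Real.sSup_le (hub n) (lam0_nonneg hC1)
    have hge : ∀ᶠ n in atTop,
        Lpen G11 G12 G22 D (τ n) (pφ n) (pψ n) ≤ sSup (S n) := by
      filter_upwards [hevφ, hevψ] with n hφ0 hψ0
      have huφ : pφ n ≠ 0 := by
        intro h
        rw [h] at hφ0
        simp at hφ0
      have huψ : pψ n ≠ 0 := by
        intro h
        rw [h] at hψ0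
        simp at hψ0
      exact le_csSup ⟨lam0 G11 G12 G22, fun x hx => hub n x hx⟩
        ⟨pφ n, pψ n, hmem (dn n) (φ₁ : H), hmem (dn n) (ψ₁ : H), huφ, huψ, rfl⟩
    exact tendsto_of_tendsto_of_tendsto_of_le_of_le' hf tendsto_const_nhds hge
      (Eventually.of_forall hle)
end RSCCA
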